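/- Let n ≥ 1 and let o : ℚⁿ → ℚⁿ be a vector of operators where each component is of one of the forms x ↦ max over a nonempty finite family of (x_{j} + k_j), x ↦ min over such a family, or a weighted average x ↦ (Σ α_j x_{j})/(Σ α_j) + k with positive rational weights α_j. Then it is impossible that there simultaneously exist x ∈ ℚⁿ with x < o(x) componentwise and y ∈ (ℚ ∪ {+∞})ⁿ, not identically +∞, with y ≥ o(y) componentwise (where the operators are extended to ℚ ∪ {+∞} in the natural way, with the conventions max/min/averages involving +∞ equal +∞ when all relevant arguments are +∞, min picks finite values when available, and any average involving +∞ is +∞). -/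

import Mathlib

/-- Weighted average operator on `(ℚ ∪ {+∞})ⁿ`: equals `+∞` as soon as one of the
relevant arguments is `+∞`. -/
noncomputable def wavg {n m : ℕ} (j : Fin (m + 1) → Fin n) (α : Fin (m + 1) → ℚ)
    (k : ℚ) (x : Fin n → WithTop ℚ) : WithTop ℚ :=
  if h : ∀ l, x (j l) ≠ ⊤ then
    (((∑ l, α l * ((x (j l)).untop (h l))) / (∑ l, α l) + k : ℚ) : WithTop ℚ)
  else ⊤

/-- The class `𝒪_n` of max-plus, min-plus and weighted-average operators, extended
to `ℚ ∪ {+∞}`. -/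
noncomputable def IsOp (n : ℕ) (f : (Fin n → WithTop ℚ) → WithTop ℚ) : Prop :=
  (∃ (m : ℕ) (j : Fin (m + 1) → Fin n) (k : Fin (m + 1) → ℚ),
      ∀ x, f x = Finset.univ.sup' Finset.univ_nonempty
        (fun l => x (j l) + (k l : WithTop ℚ))) ∨
  (∃ (m : ℕ) (j : Fin (m + 1) → Fin n) (k : Fin (m + 1) → ℚ),
      ∀ x, f x = Finset.univ.inf' Finset.univ_nonempty
        (fun l => x (j l) + (k l : WithTop ℚ))) ∨
  (∃ (m : ℕ) (j : Fin (m + 1) → Fin n) (α : Fin (m + 1) → ℚ) (k : ℚ),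
      (∀ l, 0 < α l) ∧ ∀ x, f x = wavg j α k x)

lemma isOp_mono {n : ℕ} {f : (Fin n → WithTop ℚ) → WithTop ℚ} (h : IsOp n f) :
    Monotone f := by
  rcases h with ⟨m, j, k, hf⟩ | ⟨m, j, k, hf⟩ | ⟨m, j, α, k, hα, hf⟩
  · intro x y hxy
    simp only [hf]
    refine Finset.sup'_le _ _ fun l _ => ?_
    exact le_trans (add_le_add (hxy (j l)) le_rfl)
      (Finset.le_sup' (fun l => y (j l) + (k l : WithTop ℚ)) (Finset.mem_univ l))
  · intro x y hxy
    simp only [hf]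
    refine Finset.le_inf' _ _ fun l _ => ?_
    exact le_trans (Finset.inf'_le (fun l => x (j l) + (k l : WithTop ℚ)) (Finset.mem_univ l))
      (add_le_add (hxy (j l)) le_rfl)
  · intro x y hxy
    simp only [hf, wavg]
    by_cases hy : ∀ l, y (j l) ≠ ⊤
    · have hx : ∀ l, x (j l) ≠ ⊤ := fun l => ne_top_of_le_ne_top (hy l) (hxy (j l))
      rw [dif_pos hx, dif_pos hy, WithTop.coe_le_coe]
      have hs : 0 < ∑ l, α l := Finset.sum_pos (fun l _ => hα l) Finset.univ_nonempty
      gcongr with l hl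
      · exact le_of_lt (hα l)
      · rw [← WithTop.coe_le_coe, WithTop.coe_untop, WithTop.coe_untop]
        exact hxy (j l)
    · rw [dif_neg hy]
      exact le_top

lemma coe_sup' {m : ℕ} (g : Fin (m + 1) → ℚ) :
    ((Finset.univ.sup' Finset.univ_nonempty g : ℚ) : WithTop ℚ)
      = Finset.univ.sup' Finset.univ_nonempty (fun l => ((g l : ℚ) : WithTop ℚ)) :=
  Finset.comp_sup'_eq_sup'_comp _ (fun a : ℚ => (a : WithTop ℚ))
    (fun a b => WithTop.coe_sup a b)

lemma coe_inf' {m : ℕ} (g : Fin (m + 1) → ℚ) :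
    ((Finset.univ.inf' Finset.univ_nonempty g : ℚ) : WithTop ℚ)
      = Finset.univ.inf' Finset.univ_nonempty (fun l => ((g l : ℚ) : WithTop ℚ)) :=
  Finset.apply_inf'_eq_inf'_comp _ (fun a : ℚ => (a : WithTop ℚ))
    (fun a b => WithTop.coe_inf a b)

lemma sup'_add {m : ℕ} (g : Fin (m + 1) → ℚ) (c : ℚ) :
    Finset.univ.sup' Finset.univ_nonempty (fun l => g l + c)
      = Finset.univ.sup' Finset.univ_nonempty g + c :=
  (Finset.comp_sup'_eq_sup'_comp _ (fun a : ℚ => a + c)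
    (fun a b => by simp [max_add_add_right])).symm

lemma inf'_add {m : ℕ} (g : Fin (m + 1) → ℚ) (c : ℚ) :
    Finset.univ.inf' Finset.univ_nonempty (fun l => g l + c)
      = Finset.univ.inf' Finset.univ_nonempty g + c :=
  (Finset.apply_inf'_eq_inf'_comp _ (fun a : ℚ => a + c)
    (fun a b => by simp [min_add_add_right])).symm

lemma isOp_shift {n : ℕ} {f : (Fin n → WithTop ℚ) → WithTop ℚ} (h : IsOp n f)
    (x : Fin n → ℚ) (c : ℚ) :
    f (fun j => ((x j + c : ℚ) : WithTop ℚ)) = f (fun j => (x j : WithTop ℚ)) + (c : WithTop ℚ) := by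
  rcases h with ⟨m, j, k, hf⟩ | ⟨m, j, k, hf⟩ | ⟨m, j, α, k, hα, hf⟩
  · simp only [hf, ← WithTop.coe_add, ← coe_sup', WithTop.coe_inj]
    rw [← sup'_add]
    exact Finset.sup'_congr _ rfl (fun l _ => by ring)
  · simp only [hf, ← WithTop.coe_add, ← coe_inf', WithTop.coe_inj]
    rw [← inf'_add]
    exact Finset.inf'_congr _ rfl (fun l _ => by ring)
  · simp only [hf, wavg]
    have hs : 0 < ∑ l, α l := Finset.sum_pos (fun l _ => hα l) Finset.univ_nonempty
    rw [dif_pos (fun l => WithTop.coe_ne_top), dif_pos (fun l => WithTop.coe_ne_top)]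
    simp only [WithTop.untop_coe, ← WithTop.coe_add, WithTop.coe_inj]
    field_simp
    simp only [mul_add, Finset.sum_add_distrib, ← Finset.sum_mul]
    ring

theorem stmt0 (n : ℕ) (hn : 1 ≤ n)
    (o : Fin n → (Fin n → WithTop ℚ) → WithTop ℚ) (ho : ∀ i, IsOp n (o i)) :
    ¬ ((∃ x : Fin n → ℚ, ∀ i, (x i : WithTop ℚ) < o i (fun j => (x j : WithTop ℚ))) ∧
       (∃ y : Fin n → WithTop ℚ, (¬ ∀ i, y i = ⊤) ∧ ∀ i, o i y ≤ y i)) := by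
  rintro ⟨⟨x, hx⟩, ⟨y, hyne, hy⟩⟩
  push_neg at hyne
  obtain ⟨i1, hi1⟩ := hyne
  set T : Finset (Fin n) := Finset.univ.filter (fun i => y i ≠ ⊤) with hT
  have hTne : T.Nonempty := ⟨i1, by simp [hT, hi1]⟩
  set g : Fin n → ℚ := fun i => (y i).untopD 0 - x i with hg
  obtain ⟨i0, hi0T, hi0⟩ := Finset.exists_mem_eq_inf' hTne g
  set c : ℚ := T.inf' hTne g with hc
  have hyi0 : y i0 ≠ ⊤ := by simpa [hT] using hi0T
  have hyi0eq : y i0 = (((y i0).untopD 0 : ℚ) : WithTop ℚ) := by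
    lift y i0 to ℚ using hyi0 with r
    simp
  -- y j ≥ x j + c for all j
  have key : ∀ i : Fin n, ((x i + c : ℚ) : WithTop ℚ) ≤ y i := by
    intro i
    by_cases hi : y i = ⊤
    · simp [hi]
    · have hiT : i ∈ T := by simp [hT, hi]
      have := Finset.inf'_le g hiT
      rw [← hc] at this
      have hyeq : y i = (((y i).untopD 0 : ℚ) : WithTop ℚ) := by
        lift y i to ℚ using hi with r; simp
      rw [hyeq, WithTop.coe_le_coe]
      have : c ≤ (y i).untopD 0 - x i := this
      linarith
  have step1 : o i0 (fun j => ((x j : ℚ) : WithTop ℚ)) + (c : WithTop ℚ)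
      ≤ o i0 y := by
    rw [← isOp_shift (ho i0) x c]
    exact isOp_mono (ho i0) key
  have step2 : ((x i0 + c : ℚ) : WithTop ℚ)
      < o i0 (fun j => ((x j : ℚ) : WithTop ℚ)) + (c : WithTop ℚ) := by
    rw [WithTop.coe_add]
    exact WithTop.add_lt_add_right WithTop.coe_ne_top (hx i0)
  have step3 : o i0 y ≤ y i0 := hy i0
  have : ((x i0 + c : ℚ) : WithTop ℚ) < y i0 := lt_of_lt_of_le step2 (le_trans step1 step3)
  rw [hyi0eq, WithTop.coe_lt_coe] at this
  have : c = g i0 := hi0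
  simp only [hg] at this
  linarith
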